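/- arXiv:1302.4432 — 2 statements merged into one kernel-verified Lean document; each statement's English description precedes it below -/
import Mathlib

section
/- Let $\alpha > -1$, $\beta > 0$, $R > 0$, and set $X(t) = (1 - \log t)^{-1}$ for $t \in (0,1]$. For every $c > 1/(\alpha+1)$ there exists $\eta \geq 0$ (one can take $\eta = \max\{0, ((\beta-\alpha-1)c+1)/((\alpha+1)c-1)\}$) such that for all $D \geq e^{\eta} R$ and all $r \in (0, R]$ one has $\int_0^r t^{\alpha} X^{-\beta}(t/D)\, dt \leq c\, r^{\alpha+1} X^{-\beta}(r/D)$. -/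
open MeasureTheory Set

/-- Lemma 2.5 (i): weighted logarithmic integral bound. Here `X t = (1 - log t)⁻¹`,
so `X^{-β}(t/D) = (1 - log (t/D))^β`. -/
theorem stmt_0 (α β R c : ℝ) (hα : -1 < α) (hβ : 0 < β) (hR : 0 < R)
    (hc : 1 / (α + 1) < c) :
    ∃ η : ℝ, 0 ≤ η ∧ η = max 0 (((β - α - 1) * c + 1) / ((α + 1) * c - 1)) ∧
      ∀ D : ℝ, Real.exp η * R ≤ D → ∀ r : ℝ, 0 < r → r ≤ R →
        ∫ t in Ioo (0 : ℝ) r, t ^ α * (1 - Real.log (t / D)) ^ β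
          ≤ c * r ^ (α + 1) * (1 - Real.log (r / D)) ^ β := by
  have hα1 : 0 < α + 1 := by linarith
  have hc0 : 0 < c := lt_trans (by positivity) hc
  have hd : 0 < (α + 1) * c - 1 := by
    have := (div_lt_iff₀ hα1).mp hc
    nlinarith
  set η := max 0 (((β - α - 1) * c + 1) / ((α + 1) * c - 1)) with hηdef
  have hη0 : 0 ≤ η := le_max_left _ _
  refine ⟨η, hη0, rfl, ?_⟩
  intro D hD r hr hrR
  have hD0 : 0 < D := lt_of_lt_of_le (by positivity) hD
  set ε := α + 1 - 1 / c with hεdef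
  have hεc : ε * c = (α + 1) * c - 1 := by rw [hεdef]; field_simp
  have hε : 0 < ε := by nlinarith
  set L := 1 - Real.log (r / D) with hLdef
  -- `r / D ≤ exp (-η)`
  have hrD : r / D ≤ Real.exp (-η) := by
    rw [div_le_iff₀ hD0]
    have h1 : Real.exp (-η) * (Real.exp η * R) ≤ Real.exp (-η) * D :=
      mul_le_mul_of_nonneg_left hD (Real.exp_pos _).le
    calc r ≤ R := hrR
      _ = Real.exp (-η) * (Real.exp η * R) := by
          rw [← mul_assoc, ← Real.exp_add]; simp
      _ ≤ Real.exp (-η) * D := h1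
  have hlog : Real.log (r / D) ≤ -η :=
    (Real.log_le_iff_le_exp (by positivity)).mpr hrD
  have hL1 : 1 + η ≤ L := by rw [hLdef]; linarith
  have hL0 : 0 < L := by linarith
  -- key arithmetic inequality : `β ≤ L * ε`
  have hβL : β ≤ L * ε := by
    have hηge : (β - α - 1) * c + 1 ≤ η * ((α + 1) * c - 1) :=
      (div_le_iff₀ hd).mp (le_max_right _ _)
    nlinarith [mul_le_mul_of_nonneg_right hL1 (mul_pos hε hc0).le]
  have hαε : (-1 : ℝ) < α - ε := by
    have h1c : 0 < 1 / c := by positivity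
    rw [hεdef]; linarith
  -- pointwise bound
  have hkey : ∀ t ∈ Ioo (0 : ℝ) r,
      t ^ α * (1 - Real.log (t / D)) ^ β ≤ L ^ β * r ^ ε * t ^ (α - ε) := by
    rintro t ⟨ht0, htr⟩
    set u := Real.log r - Real.log t with hu
    have hu0 : 0 ≤ u := by
      have := Real.log_le_log ht0 htr.le
      rw [hu]; linarith
    have h1 : 1 - Real.log (t / D) = L + u := by
      rw [hLdef, Real.log_div (ne_of_gt ht0) (ne_of_gt hD0),
        Real.log_div (ne_of_gt hr) (ne_of_gt hD0), hu]; ring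
    have hLu0 : (0 : ℝ) ≤ L + u := by linarith
    have h2 : L + u ≤ L * Real.exp (ε * u / β) := by
      have e1 : ε * u / β + 1 ≤ Real.exp (ε * u / β) := by
        have := Real.add_one_le_exp (ε * u / β); linarith
      have e3 : u ≤ L * ε * u / β := by
        rw [le_div_iff₀ hβ]
        nlinarith [mul_le_mul_of_nonneg_left hβL hu0]
      have e4 : L * (ε * u / β + 1) ≤ L * Real.exp (ε * u / β) :=
        mul_le_mul_of_nonneg_left e1 hL0.le
      calc L + u ≤ L + L * ε * u / β := by linarith
        _ = L * (ε * u / β + 1) := by ring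
        _ ≤ L * Real.exp (ε * u / β) := e4
    have hrt : 0 < r / t := div_pos hr ht0
    have hexpeq : (r / t) ^ ε = Real.exp (ε * u) := by
      rw [Real.rpow_def_of_pos hrt, Real.log_div (ne_of_gt hr) (ne_of_gt ht0), hu, mul_comm]
    have h3 : (L + u) ^ β ≤ L ^ β * (r / t) ^ ε := by
      have h4 : (L + u) ^ β ≤ (L * Real.exp (ε * u / β)) ^ β :=
        Real.rpow_le_rpow hLu0 h2 hβ.le
      rw [Real.mul_rpow hL0.le (Real.exp_pos _).le, ← Real.exp_mul,
        div_mul_cancel₀ _ (ne_of_gt hβ)] at h4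
      rw [hexpeq]; exact h4
    have h5 : t ^ α * (r / t) ^ ε = r ^ ε * t ^ (α - ε) := by
      have ht' : t ^ α = t ^ (α - ε) * t ^ ε := by
        rw [← Real.rpow_add ht0]; congr 1; ring
      have htε : t ^ ε ≠ 0 := ne_of_gt (Real.rpow_pos_of_pos ht0 ε)
      rw [ht', Real.div_rpow hr.le ht0.le]
      field_simp
    calc t ^ α * (1 - Real.log (t / D)) ^ β
        = t ^ α * (L + u) ^ β := by rw [h1]
      _ ≤ t ^ α * (L ^ β * (r / t) ^ ε) :=
          mul_le_mul_of_nonneg_left h3 (Real.rpow_nonneg ht0.le _)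
      _ = L ^ β * (t ^ α * (r / t) ^ ε) := by ring
      _ = L ^ β * (r ^ ε * t ^ (α - ε)) := by rw [h5]
      _ = L ^ β * r ^ ε * t ^ (α - ε) := by ring
  -- integrability of the majorant
  have hint_g : IntegrableOn (fun t : ℝ => L ^ β * r ^ ε * t ^ (α - ε)) (Ioo 0 r) := by
    apply Integrable.const_mul
    have h1 : IntervalIntegrable (fun t : ℝ => t ^ (α - ε)) volume 0 r :=
      intervalIntegral.intervalIntegrable_rpow' hαε
    have h2 : IntegrableOn (fun t : ℝ => t ^ (α - ε)) (Ioc 0 r) :=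
      (intervalIntegrable_iff_integrableOn_Ioc_of_le hr.le).mp h1
    exact h2.mono_set Ioo_subset_Ioc_self
  -- integrability of the integrand
  have hmf : AEStronglyMeasurable (fun t : ℝ => t ^ α * (1 - Real.log (t / D)) ^ β)
      (volume.restrict (Ioo 0 r)) := by
    apply ContinuousOn.aestronglyMeasurable _ measurableSet_Ioo
    intro t ht
    have ht0 : t ≠ 0 := ne_of_gt ht.1
    have c1 : ContinuousAt (fun t : ℝ => t ^ α) t :=
      Real.continuousAt_rpow_const t α (Or.inl ht0)
    have cin : ContinuousAt (fun t : ℝ => 1 - Real.log (t / D)) t :=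
      continuousAt_const.sub ((continuousAt_id.div_const D).log
        (div_ne_zero ht0 (ne_of_gt hD0)))
    have c2 : ContinuousAt (fun t : ℝ => (1 - Real.log (t / D)) ^ β) t :=
      cin.rpow_const (Or.inr hβ.le)
    exact (c1.mul c2).continuousWithinAt
  have hnonneg : ∀ t ∈ Ioo (0 : ℝ) r, 0 ≤ t ^ α * (1 - Real.log (t / D)) ^ β := by
    rintro t ⟨ht0, htr⟩
    have hlt : Real.log (t / D) ≤ Real.log (r / D) :=
      Real.log_le_log (by positivity) (by gcongr)
    have : (0 : ℝ) ≤ 1 - Real.log (t / D) := by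
      rw [hLdef] at hL0; linarith
    exact mul_nonneg (Real.rpow_nonneg ht0.le _) (Real.rpow_nonneg this _)
  have hif : IntegrableOn (fun t : ℝ => t ^ α * (1 - Real.log (t / D)) ^ β) (Ioo 0 r) := by
    apply hint_g.mono' hmf
    filter_upwards [ae_restrict_mem measurableSet_Ioo] with t ht
    rw [Real.norm_eq_abs, abs_of_nonneg (hnonneg t ht)]
    exact hkey t ht
  have hmono := setIntegral_mono_on hif hint_g measurableSet_Ioo hkey
  refine le_trans hmono ?_
  -- compute the integral of the majorant
  have hcalc : ∫ t in Ioo (0 : ℝ) r, L ^ β * r ^ ε * t ^ (α - ε)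
      = L ^ β * r ^ ε * ∫ t in Ioo (0 : ℝ) r, t ^ (α - ε) := by
    rw [integral_const_mul]
  have hval : ∫ t in Ioo (0 : ℝ) r, (t : ℝ) ^ (α - ε) = c * r ^ (α - ε + 1) := by
    rw [← integral_Ioc_eq_integral_Ioo, ← intervalIntegral.integral_of_le hr.le,
      integral_rpow (Or.inl hαε)]
    have hz : (0 : ℝ) ^ (α - ε + 1) = 0 := by
      apply Real.zero_rpow
      have : α - ε + 1 = 1 / c := by rw [hεdef]; ring
      rw [this]; positivity
    have hne : α - ε + 1 = 1 / c := by rw [hεdef]; ring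
    rw [hz, hne]
    field_simp
    ring
  rw [hcalc, hval]
  apply le_of_eq
  have hpow : r ^ ε * r ^ (α - ε + 1) = r ^ (α + 1) := by
    rw [← Real.rpow_add hr]; ring_nf
  calc L ^ β * r ^ ε * (c * r ^ (α - ε + 1)) = c * (r ^ ε * r ^ (α - ε + 1)) * L ^ β := by ring
    _ = c * r ^ (α + 1) * L ^ β := by rw [hpow]
end

section
/- Let $\alpha \in (-1, 0]$, $\beta > 0$, $R > 0$, and $X(t) = (1-\log t)^{-1}$ for $t \in (0,1]$. For every $c > 1/(\alpha+1)$ there exists $\eta \geq 0$ such that for all $D \geq e^{\eta} R$ and all $0 \leq y \leq x \leq R$, one has $\int_y^x t^{\alpha} X^{-\beta}(t/D)\, dt \leq c\,(x-y)^{\alpha+1} X^{-\beta}((x-y)/D)$. -/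
open MeasureTheory Set

private lemma my_rpow_sub_le {a b p : ℝ} (hb : 0 ≤ b) (hba : b ≤ a) (hp : 0 ≤ p) (hp1 : p ≤ 1) :
    a ^ p - b ^ p ≤ (a - b) ^ p := by
  have ha : a ^ p ≤ (a - b) ^ p + b ^ p := by
    have h0 : (0:ℝ) ≤ a - b := by linarith
    lift (a - b) to NNReal using h0 with u hu
    lift b to NNReal using hb with v hv
    have : a = ((u + v : NNReal) : ℝ) := by push_cast; linarith
    rw [this]
    exact_mod_cast NNReal.rpow_add_le_add_rpow u v hp hp1
  linarith

private lemma aux_main (α β c D : ℝ) (hα : -1 < α) (hβ : 0 < β)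
    (hc0 : 0 < c) (hK : 0 < c * (α + 1) - 1)
    (x y : ℝ) (hy : 0 < y) (hyx : y ≤ x) (hxD : x ≤ D)
    (hL : ∀ t : ℝ, 0 < t → t ≤ x → c * β ≤ (c * (α + 1) - 1) * (1 - Real.log (t / D))) :
    ∫ t in Ioo y x, t ^ α * (1 - Real.log (t / D)) ^ β
      ≤ c * x ^ (α + 1) * (1 - Real.log (x / D)) ^ β
        - c * y ^ (α + 1) * (1 - Real.log (y / D)) ^ β := by
  have hD : 0 < D := lt_of_lt_of_le (hy.trans_le hyx) hxD
  set L : ℝ → ℝ := fun t => 1 - Real.log (t / D) with hLdef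
  have hLpos : ∀ t : ℝ, 0 < t → t ≤ x → 0 < L t := by
    intro t ht htx
    have h1 : c * β ≤ (c * (α + 1) - 1) * L t := hL t ht htx
    nlinarith [mul_pos hc0 hβ]
  set g' : ℝ → ℝ := fun t =>
    c * ((α + 1) * t ^ α * L t ^ β + t ^ (α + 1) * (-t⁻¹ * β * L t ^ (β - 1))) with hg'def
  -- derivative
  have hderiv : ∀ t ∈ uIcc y x, HasDerivAt
      (fun t => c * (t ^ (α + 1) * L t ^ β)) (g' t) t := by
    intro t ht
    rw [uIcc_of_le hyx] at ht
    have ht0 : 0 < t := lt_of_lt_of_le hy ht.1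
    have hLt : 0 < L t := hLpos t ht0 ht.2
    have h1 : HasDerivAt (fun t : ℝ => t ^ (α + 1)) ((α + 1) * t ^ α) t := by
      have := Real.hasDerivAt_rpow_const (x := t) (p := α + 1) (Or.inl ht0.ne')
      simpa [add_sub_cancel_right] using this
    have h2 : HasDerivAt (fun t : ℝ => L t) (-t⁻¹) t := by
      have hd : HasDerivAt (fun t : ℝ => t / D) (1 / D) t := by
        simpa using (hasDerivAt_id t).div_const D
      have hlog : HasDerivAt (fun t : ℝ => Real.log (t / D)) ((t / D)⁻¹ * (1 / D)) t :=
        (Real.hasDerivAt_log (by positivity)).comp t hd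
      have h : HasDerivAt (fun t : ℝ => 1 - Real.log (t / D)) (0 - (t / D)⁻¹ * (1 / D)) t :=
        (hasDerivAt_const t (1:ℝ)).sub hlog
      have heq : 0 - (t / D)⁻¹ * (1 / D) = -t⁻¹ := by
        field_simp
        ring
      exact heq ▸ h
    have h3 : HasDerivAt (fun t : ℝ => L t ^ β) (-t⁻¹ * β * L t ^ (β - 1)) t :=
      h2.rpow_const (Or.inl hLt.ne')
    exact (h1.mul h3).const_mul c
  -- continuity of g'
  have hcontg' : ContinuousOn g' (Icc y x) := by
    intro t ht
    have ht0 : 0 < t := lt_of_lt_of_le hy ht.1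
    have hLt : 0 < L t := hLpos t ht0 ht.2
    have cL : ContinuousAt L t :=
      continuousAt_const.sub ((Real.continuousAt_log (by positivity)).comp
        (continuousAt_id.div_const D))
    have c1 : ContinuousAt (fun t : ℝ => t ^ α) t :=
      continuousAt_id.rpow_const (Or.inl ht0.ne')
    have c2 : ContinuousAt (fun t : ℝ => t ^ (α + 1)) t :=
      continuousAt_id.rpow_const (Or.inl ht0.ne')
    have c3 : ContinuousAt (fun t : ℝ => L t ^ β) t := cL.rpow_const (Or.inl hLt.ne')
    have c4 : ContinuousAt (fun t : ℝ => L t ^ (β - 1)) t := cL.rpow_const (Or.inl hLt.ne')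
    have c5 : ContinuousAt (fun t : ℝ => -t⁻¹) t := (continuousAt_inv₀ ht0.ne').neg
    exact (continuousAt_const.mul (((continuousAt_const.mul c1).mul c3).add
      (c2.mul ((c5.mul continuousAt_const).mul c4)))).continuousWithinAt
  have hcontf : ContinuousOn (fun t : ℝ => t ^ α * L t ^ β) (Icc y x) := by
    intro t ht
    have ht0 : 0 < t := lt_of_lt_of_le hy ht.1
    have hLt : 0 < L t := hLpos t ht0 ht.2
    have cL : ContinuousAt L t :=
      continuousAt_const.sub ((Real.continuousAt_log (by positivity)).comp
        (continuousAt_id.div_const D))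
    exact ((continuousAt_id.rpow_const (Or.inl ht0.ne')).mul
      (cL.rpow_const (Or.inl hLt.ne'))).continuousWithinAt
  -- FTC
  have hFTC : ∫ t in y..x, g' t
      = c * (x ^ (α + 1) * L x ^ β) - c * (y ^ (α + 1) * L y ^ β) :=
    intervalIntegral.integral_eq_sub_of_hasDerivAt hderiv
      ((hcontg'.mono (by rw [uIcc_of_le hyx])).intervalIntegrable)
  -- pointwise bound
  have hptwise : ∀ t ∈ Ioo y x, t ^ α * L t ^ β ≤ g' t := by
    intro t ht
    have ht0 : 0 < t := lt_of_lt_of_le hy ht.1.le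
    have htx : t ≤ x := ht.2.le
    have hLt : 0 < L t := hLpos t ht0 htx
    have hKey : c * β ≤ (c * (α + 1) - 1) * L t := hL t ht0 htx
    have hta : 0 < t ^ α := Real.rpow_pos_of_pos ht0 α
    have hLb : 0 ≤ L t ^ β := (Real.rpow_pos_of_pos hLt β).le
    have hrw : t ^ (α + 1) = t ^ α * t := Real.rpow_add_one ht0.ne' α
    have hrw2 : L t ^ (β - 1) = L t ^ β / L t := Real.rpow_sub_one hLt.ne' β
    have hstep : c * β * L t ^ (β - 1) ≤ (c * (α + 1) - 1) * L t ^ β := by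
      have e : ((c * (α + 1) - 1) * L t) * L t ^ (β - 1) = (c * (α + 1) - 1) * L t ^ β := by
        rw [hrw2]; field_simp
      calc c * β * L t ^ (β - 1)
          ≤ ((c * (α + 1) - 1) * L t) * L t ^ (β - 1) :=
            mul_le_mul_of_nonneg_right hKey (Real.rpow_nonneg hLt.le _)
        _ = (c * (α + 1) - 1) * L t ^ β := e
    have hsimp : t ^ α * t * (-t⁻¹ * β * L t ^ (β - 1)) = -(t ^ α * (β * L t ^ (β - 1))) := by
      field_simp
    show t ^ α * L t ^ β
        ≤ c * ((α + 1) * t ^ α * L t ^ β + t ^ (α + 1) * (-t⁻¹ * β * L t ^ (β - 1)))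
    rw [hrw, hsimp]
    nlinarith [mul_le_mul_of_nonneg_left hstep hta.le]
  have hint_f : IntegrableOn (fun t : ℝ => t ^ α * L t ^ β) (Ioo y x) :=
    (hcontf.integrableOn_Icc).mono_set Ioo_subset_Icc_self
  have hint_g' : IntegrableOn g' (Ioo y x) :=
    (hcontg'.integrableOn_Icc).mono_set Ioo_subset_Icc_self
  calc ∫ t in Ioo y x, t ^ α * L t ^ β ≤ ∫ t in Ioo y x, g' t :=
        setIntegral_mono_on hint_f hint_g' measurableSet_Ioo hptwise
    _ = ∫ t in y..x, g' t := by
        rw [intervalIntegral.integral_of_le hyx, integral_Ioc_eq_integral_Ioo]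
    _ = c * (x ^ (α + 1) * L x ^ β) - c * (y ^ (α + 1) * L y ^ β) := hFTC
    _ = c * x ^ (α + 1) * L x ^ β - c * y ^ (α + 1) * L y ^ β := by ring

private lemma aux_zero (α β c D : ℝ) (hα : -1 < α) (hβ : 0 < β)
    (hc0 : 0 < c) (hK : 0 < c * (α + 1) - 1)
    (x : ℝ) (hx : 0 < x) (hxD : x ≤ D)
    (hL : ∀ t : ℝ, 0 < t → t ≤ x → c * β ≤ (c * (α + 1) - 1) * (1 - Real.log (t / D))) :
    ∫ t in Ioo 0 x, t ^ α * (1 - Real.log (t / D)) ^ β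
      ≤ c * x ^ (α + 1) * (1 - Real.log (x / D)) ^ β := by
  have hD : 0 < D := hx.trans_le hxD
  set f : ℝ → ℝ := fun t => t ^ α * (1 - Real.log (t / D)) ^ β with hfdef
  have hLpos : ∀ t : ℝ, 0 < t → t ≤ x → 0 < 1 - Real.log (t / D) := by
    intro t ht htx
    have h1 := hL t ht htx
    nlinarith [mul_pos hc0 hβ]
  set ε : ℝ := (α + 1) / (2 * β) with hεdef
  have hε : 0 < ε := div_pos (by linarith) (by linarith)
  have hεβ : ε * β = (α + 1) / 2 := by
    rw [hεdef]; field_simp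
  -- the pointwise majorant
  have hbound : ∀ t ∈ Ioo 0 x,
      ‖f t‖ ≤ (1 + ε⁻¹) ^ β * D ^ (ε * β) * t ^ ((α - 1) / 2) := by
    intro t ht
    have ht0 : 0 < t := ht.1
    have hs : 0 < t / D := by positivity
    have hs1 : t / D ≤ 1 := by rw [div_le_one hD]; linarith [ht.2]
    have hu1 : 1 ≤ (t / D) ^ (-ε) :=
      Real.one_le_rpow_of_pos_of_le_one_of_nonpos hs hs1 (by linarith)
    have hlog : Real.log ((t / D) ^ (-ε)) = -ε * Real.log (t / D) := Real.log_rpow hs _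
    have hlogle : Real.log ((t / D) ^ (-ε)) ≤ (t / D) ^ (-ε) :=
      (Real.log_le_sub_one_of_pos (by positivity)).trans (by linarith)
    have hLle : 1 - Real.log (t / D) ≤ (1 + ε⁻¹) * (t / D) ^ (-ε) := by
      have he : Real.log (t / D) = -(ε⁻¹ * Real.log ((t / D) ^ (-ε))) := by
        rw [hlog]; field_simp
      have e2 : ε⁻¹ * Real.log ((t / D) ^ (-ε)) ≤ ε⁻¹ * (t / D) ^ (-ε) :=
        mul_le_mul_of_nonneg_left hlogle (inv_nonneg.2 hε.le)
      rw [he]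
      linarith [hu1]
    have hLp : 0 < 1 - Real.log (t / D) := hLpos t ht0 ht.2.le
    have h2 : (1 - Real.log (t / D)) ^ β ≤ ((1 + ε⁻¹) * (t / D) ^ (-ε)) ^ β :=
      Real.rpow_le_rpow hLp.le hLle hβ.le
    have h3 : ((1 + ε⁻¹) * (t / D) ^ (-ε)) ^ β = (1 + ε⁻¹) ^ β * (t / D) ^ (-(ε * β)) := by
      rw [Real.mul_rpow (by positivity) (by positivity), ← Real.rpow_mul hs.le]
      ring_nf
    have h4 : (t / D) ^ (-(ε * β)) = t ^ (-(ε * β)) * D ^ (ε * β) := by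
      rw [Real.div_rpow ht0.le hD.le, Real.rpow_neg hD.le, div_eq_mul_inv, inv_inv]
    have h5 : t ^ α * t ^ (-(ε * β)) = t ^ ((α - 1) / 2) := by
      rw [← Real.rpow_add ht0]
      congr 1
      rw [hεβ]; ring
    have hnorm : ‖f t‖ = f t := by
      refine Real.norm_of_nonneg ?_
      exact mul_nonneg (Real.rpow_nonneg ht0.le _) (Real.rpow_nonneg hLp.le _)
    rw [hnorm]
    have hta : 0 ≤ t ^ α := Real.rpow_nonneg ht0.le _
    calc f t = t ^ α * (1 - Real.log (t / D)) ^ β := rfl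
      _ ≤ t ^ α * ((1 + ε⁻¹) ^ β * (t / D) ^ (-(ε * β))) := by
          refine mul_le_mul_of_nonneg_left ?_ hta
          rw [← h3]; exact h2
      _ = (1 + ε⁻¹) ^ β * D ^ (ε * β) * (t ^ α * t ^ (-(ε * β))) := by
          rw [h4]; ring
      _ = (1 + ε⁻¹) ^ β * D ^ (ε * β) * t ^ ((α - 1) / 2) := by rw [h5]
  -- the majorant is integrable
  have hmaj : IntegrableOn
      (fun t : ℝ => (1 + ε⁻¹) ^ β * D ^ (ε * β) * t ^ ((α - 1) / 2)) (Ioo 0 x) := by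
    have h : IntervalIntegrable (fun t : ℝ => t ^ ((α - 1) / 2)) volume 0 x :=
      intervalIntegral.intervalIntegrable_rpow' (by linarith)
    exact (h.1.mono_set Ioo_subset_Ioc_self).const_mul _
  have hmeas : AEStronglyMeasurable f (volume.restrict (Ioo 0 x)) := by
    refine ContinuousOn.aestronglyMeasurable ?_ measurableSet_Ioo
    intro t ht
    have ht0 : 0 < t := ht.1
    have hLp := hLpos t ht0 ht.2.le
    exact ((continuousAt_id.rpow_const (Or.inl ht0.ne')).mul
      ((continuousAt_const.sub ((Real.continuousAt_log (by positivity)).comp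
        (continuousAt_id.div_const D))).rpow_const (Or.inl hLp.ne'))).continuousWithinAt
  have hint : IntegrableOn f (Ioo 0 x) := by
    refine Integrable.mono' hmaj hmeas ?_
    filter_upwards [ae_restrict_mem measurableSet_Ioo] with t ht using hbound t ht
  -- exhaust `Ioo 0 x` by `Ioo (x / (n+2)) x`
  set s : ℕ → Set ℝ := fun n => Ioo (x / (n + 2)) x with hsdef
  have hsm : ∀ n, MeasurableSet (s n) := fun n => measurableSet_Ioo
  have hmono : Monotone s := by
    intro n m hnm
    apply Ioo_subset_Ioo _ le_rfl
    have hc : (n:ℝ) ≤ m := Nat.cast_le.mpr hnm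
    exact div_le_div_of_nonneg_left hx.le (by positivity) (by linarith)
  have hunion : ⋃ n, s n = Ioo 0 x := by
    ext t
    simp only [hsdef, mem_iUnion, mem_Ioo]
    constructor
    · rintro ⟨n, h1, h2⟩
      refine ⟨lt_trans ?_ h1, h2⟩
      positivity
    · rintro ⟨h1, h2⟩
      obtain ⟨n, hn⟩ := exists_nat_gt (x / t)
      refine ⟨n, ?_, h2⟩
      rw [div_lt_iff₀ (by positivity)]
      rw [div_lt_iff₀ h1] at hn
      nlinarith [h1]
  have htend := tendsto_setIntegral_of_monotone hsm hmono (hunion ▸ hint)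
  rw [hunion] at htend
  refine le_of_tendsto htend (Filter.Eventually.of_forall fun n => ?_)
  have hyn : 0 < x / (n + 2) := by positivity
  have hyxn : x / (n + 2) ≤ x := by
    apply div_le_self hx.le
    have : (0:ℝ) ≤ n := Nat.cast_nonneg n
    linarith
  have h1 := aux_main α β c D hα hβ hc0 hK x (x / (n + 2)) hyn hyxn hxD hL
  have hLy : 0 < 1 - Real.log (x / (n + 2) / D) := hLpos _ hyn hyxn
  have h2 : 0 ≤ c * (x / (n + 2)) ^ (α + 1) * (1 - Real.log (x / (n + 2) / D)) ^ β := by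
    have := Real.rpow_nonneg hyn.le (α + 1)
    have := Real.rpow_nonneg hLy.le β
    positivity
  calc ∫ t in s n, f t = ∫ t in Ioo (x / (n + 2)) x, f t := rfl
    _ ≤ c * x ^ (α + 1) * (1 - Real.log (x / D)) ^ β
        - c * (x / (n + 2)) ^ (α + 1) * (1 - Real.log (x / (n + 2) / D)) ^ β := h1
    _ ≤ c * x ^ (α + 1) * (1 - Real.log (x / D)) ^ β := by linarith

/-- Lemma 2.5 (ii): with `X t = (1 - log t)⁻¹`, so `X^{-β}(t/D) = (1 - log (t/D))^β`. -/
theorem stmt_1 (α β R c : ℝ) (hα : -1 < α) (hα' : α ≤ 0) (hβ : 0 < β) (hR : 0 < R)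
    (hc : 1 / (α + 1) < c) :
    ∃ η : ℝ, 0 ≤ η ∧
      ∀ D : ℝ, Real.exp η * R ≤ D → ∀ x y : ℝ, 0 ≤ y → y ≤ x → x ≤ R →
        ∫ t in Ioo y x, t ^ α * (1 - Real.log (t / D)) ^ β
          ≤ c * (x - y) ^ (α + 1) * (1 - Real.log ((x - y) / D)) ^ β := by
  have hα1 : 0 < α + 1 := by linarith
  have hc0 : 0 < c := lt_trans (by positivity) hc
  have hK : 0 < c * (α + 1) - 1 := by
    rw [div_lt_iff₀ hα1] at hc
    linarith
  set η : ℝ := max 0 (c * β / (c * (α + 1) - 1) - 1) with hηdef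
  refine ⟨η, le_max_left _ _, ?_⟩
  intro D hD x y hy hyx hxR
  have hD0 : 0 < D := lt_of_lt_of_le (by positivity) hD
  have hL : ∀ t : ℝ, 0 < t → t ≤ R → c * β ≤ (c * (α + 1) - 1) * (1 - Real.log (t / D)) := by
    intro t ht htR
    have h1 : t / D ≤ R / D := by gcongr
    have h2 : R / D ≤ Real.exp (-η) := by
      rw [div_le_iff₀ hD0]
      calc R = Real.exp (-η) * (Real.exp η * R) := by
            rw [← mul_assoc, ← Real.exp_add]; simp
        _ ≤ Real.exp (-η) * D :=
            mul_le_mul_of_nonneg_left hD (Real.exp_pos _).le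
    have h3 : Real.log (t / D) ≤ -η := by
      calc Real.log (t / D) ≤ Real.log (Real.exp (-η)) :=
            Real.log_le_log (by positivity) (h1.trans h2)
        _ = -η := Real.log_exp _
    have h4 : c * β / (c * (α + 1) - 1) ≤ 1 + η := by
      have := le_max_right (0:ℝ) (c * β / (c * (α + 1) - 1) - 1)
      rw [← hηdef] at this
      linarith
    have h5 : c * β ≤ (1 + η) * (c * (α + 1) - 1) := by
      rwa [div_le_iff₀ hK] at h4
    nlinarith [hK]
  have hRD : R ≤ D :=
    le_trans (le_mul_of_one_le_left hR.le (Real.one_le_exp (le_max_left _ _))) hD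
  rcases eq_or_lt_of_le hyx with heq | hlt
  · subst heq
    simp [Real.zero_rpow hα1.ne']
  · have hx0 : 0 < x := lt_of_le_of_lt hy hlt
    have hxD : x ≤ D := hxR.trans hRD
    have hL' : ∀ t : ℝ, 0 < t → t ≤ x →
        c * β ≤ (c * (α + 1) - 1) * (1 - Real.log (t / D)) :=
      fun t ht htx => hL t ht (htx.trans hxR)
    have hLx : 0 < 1 - Real.log (x / D) := by
      have := hL x hx0 hxR
      nlinarith [mul_pos hc0 hβ]
    have hLxy : 0 < 1 - Real.log ((x - y) / D) := by
      have := hL (x - y) (by linarith) (by linarith)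
      nlinarith [mul_pos hc0 hβ]
    have hmono : (1 - Real.log (x / D)) ^ β ≤ (1 - Real.log ((x - y) / D)) ^ β := by
      apply Real.rpow_le_rpow hLx.le _ hβ.le
      have : Real.log ((x - y) / D) ≤ Real.log (x / D) :=
        Real.log_le_log (div_pos (by linarith) hD0) (by gcongr <;> linarith)
      linarith
    rcases eq_or_lt_of_le hy with heq0 | hy0
    · rw [← heq0]
      simp only [sub_zero]
      exact aux_zero α β c D hα hβ hc0 hK x hx0 hxD hL'
    · have h1 := aux_main α β c D hα hβ hc0 hK x y hy0 hyx hxD hL'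
      have hLy : 0 < 1 - Real.log (y / D) := by
        have := hL y hy0 (le_trans hyx hxR)
        nlinarith [mul_pos hc0 hβ]
      have hmono2 : (1 - Real.log (x / D)) ^ β ≤ (1 - Real.log (y / D)) ^ β := by
        apply Real.rpow_le_rpow hLx.le _ hβ.le
        have : Real.log (y / D) ≤ Real.log (x / D) :=
          Real.log_le_log (by positivity) (by gcongr)
        linarith
      have hsub : x ^ (α + 1) - y ^ (α + 1) ≤ (x - y) ^ (α + 1) :=
        my_rpow_sub_le hy0.le hyx (by linarith) (by linarith)
      have hy1 : 0 ≤ y ^ (α + 1) := Real.rpow_nonneg hy0.le _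
      have hLxb : 0 ≤ (1 - Real.log (x / D)) ^ β := Real.rpow_nonneg hLx.le _
      calc ∫ t in Ioo y x, t ^ α * (1 - Real.log (t / D)) ^ β
          ≤ c * x ^ (α + 1) * (1 - Real.log (x / D)) ^ β
            - c * y ^ (α + 1) * (1 - Real.log (y / D)) ^ β := h1
        _ ≤ c * x ^ (α + 1) * (1 - Real.log (x / D)) ^ β
            - c * y ^ (α + 1) * (1 - Real.log (x / D)) ^ β := by
            have : c * y ^ (α + 1) * (1 - Real.log (x / D)) ^ β
                ≤ c * y ^ (α + 1) * (1 - Real.log (y / D)) ^ β :=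
              mul_le_mul_of_nonneg_left hmono2 (by positivity)
            linarith
        _ = c * (x ^ (α + 1) - y ^ (α + 1)) * (1 - Real.log (x / D)) ^ β := by ring
        _ ≤ c * (x - y) ^ (α + 1) * (1 - Real.log (x / D)) ^ β :=
            mul_le_mul_of_nonneg_right
              (mul_le_mul_of_nonneg_left hsub hc0.le) hLxb
        _ ≤ c * (x - y) ^ (α + 1) * (1 - Real.log ((x - y) / D)) ^ β := by
            have h0 : 0 ≤ c * (x - y) ^ (α + 1) :=
              mul_nonneg hc0.le (Real.rpow_nonneg (by linarith) _)
            exact mul_le_mul_of_nonneg_left hmono h0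
end
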